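/- Let F ∈ ℂ((x)) be a nonconstant formal Laurent series satisfying q(F)·dF/dx = p(F). Then ord F ∈ {−1, 0, 1}. Moreover: if ord F = 1, then p(0)·q(0) ≠ 0 and the coefficient of x in F equals p(0)/q(0); if ord F = 0 with constant coefficient α, then p(α)·q(α) ≠ 0 and the coefficient of x in F equals p(α)/q(α); if ord F = −1, then deg p = deg q + 2 and the coefficient of x^{−1} in F equals −(leading coefficient of q)/(leading coefficient of p). -/

import Mathlib

noncomputable def lderiv {R : Type*} [Ring R] (S : LaurentSeries R) : LaurentSeries R :=
  { coeff := fun i => (i + 1) • S.coeff (i + 1)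
    isPWO_support' := by
      have h : Function.support (fun i : ℤ => (i + 1) • S.coeff (i + 1)) ⊆
          (fun i : ℤ => i - 1) '' S.support := by
        intro i hi
        have hne : S.coeff (i + 1) ≠ 0 := by
          intro h0
          apply hi
          simp [h0]
        exact ⟨i + 1, hne, by ring⟩
      exact (S.isPWO_support'.image_of_monotone
        (fun a b hab => by simpa using hab : Monotone (fun i : ℤ => i - 1))).mono h }

open HahnSeries Polynomial

namespace Stmt3Aux

/-- `x` vanishes below `a`. -/
def Vb (x : LaurentSeries ℂ) (a : ℤ) : Prop := ∀ i < a, x.coeff i = 0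

theorem mul_vb {x y : LaurentSeries ℂ} {a b : ℤ} (hx : Vb x a) (hy : Vb y b) :
    Vb (x * y) (a + b) := by
  intro k hk
  rw [HahnSeries.coeff_mul]
  apply Finset.sum_eq_zero
  rintro ⟨i, j⟩ hij
  rw [Finset.mem_addAntidiagonal] at hij
  obtain ⟨hi, hj, hs⟩ := hij
  by_cases h : i < a
  · simp [hx i h]
  · have : j < b := by omega
    simp [hy j this]

theorem mul_coeff_vb {x y : LaurentSeries ℂ} {a b : ℤ} (hx : Vb x a) (hy : Vb y b) :
    (x * y).coeff (a + b) = x.coeff a * y.coeff b := by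
  rw [HahnSeries.coeff_mul]
  rw [Finset.sum_eq_single (a, b)]
  · rintro ⟨i, j⟩ hij hne
    rw [Finset.mem_addAntidiagonal] at hij
    obtain ⟨hi, hj, hs⟩ := hij
    by_cases h : i < a
    · simp [hx i h]
    · by_cases h' : j < b
      · simp [hy j h']
      · exfalso; apply hne
        have h1 : i = a := by omega
        have h2 : j = b := by omega
        simp [h1, h2]
  · intro hnm
    rw [Finset.mem_addAntidiagonal] at hnm
    push_neg at hnm
    by_cases hxa : x.coeff a = 0
    · simp [hxa]
    · by_cases hyb : y.coeff b = 0
      · simp [hyb]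
      · exact absurd rfl (hnm hxa hyb)

end Stmt3Aux

namespace Stmt3Aux

theorem sum_coeff {s : Finset ℕ} (f : ℕ → LaurentSeries ℂ) (k : ℤ) :
    (∑ i ∈ s, f i).coeff k = ∑ i ∈ s, (f i).coeff k :=
  map_sum (HahnSeries.coeff.addMonoidHom k) f s

theorem add_vb {x y : LaurentSeries ℂ} {a : ℤ} (hx : Vb x a) (hy : Vb y a) :
    Vb (x + y) a := fun i hi => by
  rw [HahnSeries.coeff_add, hx i hi, hy i hi, add_zero]

theorem C_vb (α : ℂ) : Vb (HahnSeries.C α) 0 := fun i hi => by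
  rw [HahnSeries.C_apply, HahnSeries.coeff_single_of_ne (by omega)]

theorem one_vb : Vb (1 : LaurentSeries ℂ) 0 := fun i hi => by
  rw [HahnSeries.coeff_one, if_neg (by omega)]

theorem pow_vb {x : LaurentSeries ℂ} {a : ℤ} (hx : Vb x a) (j : ℕ) :
    Vb (x ^ j) ((j : ℤ) * a) := by
  induction j with
  | zero => simpa using one_vb
  | succ j ih =>
    have e : ((j + 1 : ℕ) : ℤ) * a = (j : ℤ) * a + a := by push_cast; ring
    rw [pow_succ, e]
    exact mul_vb ih hx

theorem pow_coeff {x : LaurentSeries ℂ} {a : ℤ} (hx : Vb x a) (j : ℕ) :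
    (x ^ j).coeff ((j : ℤ) * a) = (x.coeff a) ^ j := by
  induction j with
  | zero => simp [HahnSeries.coeff_one]
  | succ j ih =>
    have e : ((j + 1 : ℕ) : ℤ) * a = (j : ℤ) * a + a := by push_cast; ring
    rw [e, pow_succ, mul_coeff_vb (pow_vb hx j) hx, ih, pow_succ]

theorem order_eq_of {x : LaurentSeries ℂ} {a : ℤ} (h0 : x.coeff a ≠ 0) (hv : Vb x a) :
    x.order = a := by
  have hx : x ≠ 0 := fun h => h0 (by simp [h])
  refine le_antisymm (HahnSeries.order_le_of_coeff_ne_zero h0) ?_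
  by_contra hlt
  exact (HahnSeries.coeff_order_eq_zero.not.mpr hx) (hv _ (lt_of_not_ge hlt))

theorem lderiv_coeff (F : LaurentSeries ℂ) (i : ℤ) :
    (lderiv F).coeff i = ((i : ℂ) + 1) * F.coeff (i + 1) := by
  show (i + 1) • F.coeff (i + 1) = _
  rw [zsmul_eq_mul]
  push_cast
  ring

end Stmt3Aux

namespace Stmt3Aux

theorem vb_sum {s : Finset ℕ} {f : ℕ → LaurentSeries ℂ} {a : ℤ}
    (h : ∀ i ∈ s, Vb (f i) a) : Vb (∑ i ∈ s, f i) a := fun k hk => by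
  rw [sum_coeff]
  exact Finset.sum_eq_zero fun i hi => h i hi k hk

theorem zero_vb (a : ℤ) : Vb (0 : LaurentSeries ℂ) a := fun _ _ => HahnSeries.coeff_zero

theorem C_mul_vb {x : LaurentSeries ℂ} {a : ℤ} (c : ℂ) (hx : Vb x a) :
    Vb (HahnSeries.C c * x) a := by
  have := mul_vb (C_vb c) hx
  simpa using this

theorem C_mul_coeff {x : LaurentSeries ℂ} {a : ℤ} (c : ℂ) (hx : Vb x a) :
    (HahnSeries.C c * x).coeff a = c * x.coeff a := by
  have := mul_coeff_vb (C_vb c) hx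
  simpa [HahnSeries.C_apply, HahnSeries.coeff_single_same] using this

theorem algebraMap_C (c : ℂ) : algebraMap ℂ (LaurentSeries ℂ) c = HahnSeries.C c := by
  simp [HahnSeries.algebraMap_apply', PowerSeries.algebraMap_apply,
    HahnSeries.ofPowerSeries_C]

theorem aeval_vb_neg {F : LaurentSeries ℂ} {n : ℤ} (hv : Vb F n) (hn : n < 0)
    (r : Polynomial ℂ) : Vb (Polynomial.aeval F r) ((r.natDegree : ℤ) * n) := by
  rw [Polynomial.aeval_eq_sum_range]
  apply vb_sum
  intro i hi
  simp only [Algebra.smul_def, algebraMap_C]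
  apply C_mul_vb
  intro k hk
  apply pow_vb hv i
  have hid : (i : ℤ) ≤ r.natDegree := by
    rw [Finset.mem_range] at hi; omega
  have : (r.natDegree : ℤ) * n ≤ (i : ℤ) * n := mul_le_mul_of_nonpos_right hid (le_of_lt hn)
  omega

theorem aeval_coeff_neg {F : LaurentSeries ℂ} {n : ℤ} (hv : Vb F n) (hn : n < 0)
    (r : Polynomial ℂ) :
    (Polynomial.aeval F r).coeff ((r.natDegree : ℤ) * n) =
      r.leadingCoeff * (F.coeff n) ^ r.natDegree := by
  rw [Polynomial.aeval_eq_sum_range, sum_coeff, Finset.sum_eq_single r.natDegree]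
  · simp only [Algebra.smul_def, algebraMap_C]
    rw [C_mul_coeff _ (pow_vb hv _), pow_coeff hv, Polynomial.leadingCoeff]
  · intro i hi hne
    rw [Finset.mem_range] at hi
    have hlt : (r.natDegree : ℤ) * n < (i : ℤ) * n := by
      apply mul_lt_mul_of_neg_right _ hn
      exact_mod_cast lt_of_le_of_ne (by omega : i ≤ r.natDegree) hne
    simp only [Algebra.smul_def, algebraMap_C]
    rw [C_mul_vb _ (pow_vb hv i) _ hlt]
  · intro h
    exact absurd (Finset.self_mem_range_succ r.natDegree) h

theorem sub_C_pow {F : LaurentSeries ℂ} {α : ℂ} {m : ℤ}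
    (hv : Vb (F - HahnSeries.C α) m) (hm : 0 < m) (j : ℕ) :
    Vb (F ^ j - HahnSeries.C (α ^ j)) m := by
  have hF0 : Vb F 0 := by
    intro i hi
    have h1 := hv i (by omega)
    rw [HahnSeries.coeff_sub, C_vb α i hi, sub_zero] at h1
    exact h1
  induction j with
  | zero => simpa using zero_vb m
  | succ j ih =>
    have key : F ^ (j + 1) - HahnSeries.C (α ^ (j + 1)) =
        F ^ j * (F - HahnSeries.C α) + (F ^ j - HahnSeries.C (α ^ j)) * HahnSeries.C α := by
      rw [map_pow, map_pow]
      ring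
    rw [key]
    apply add_vb
    · have := mul_vb (pow_vb hF0 j) hv
      simpa using this
    · have := mul_vb ih (C_vb α)
      simpa using this

theorem aeval_sub_C {F : LaurentSeries ℂ} {α : ℂ} {m : ℤ}
    (hv : Vb (F - HahnSeries.C α) m) (hm : 0 < m) (r : Polynomial ℂ) :
    Vb (Polynomial.aeval F r - HahnSeries.C (r.eval α)) m := by
  have key : Polynomial.aeval F r - HahnSeries.C (r.eval α) =
      ∑ i ∈ Finset.range (r.natDegree + 1),
        HahnSeries.C (r.coeff i) * (F ^ i - HahnSeries.C (α ^ i)) := by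
    rw [Polynomial.aeval_eq_sum_range, Polynomial.eval_eq_sum_range, map_sum,
      ← Finset.sum_sub_distrib]
    refine Finset.sum_congr rfl fun i _ => ?_
    rw [mul_sub, map_mul]
    simp only [Algebra.smul_def, algebraMap_C]
  rw [key]
  exact vb_sum fun i _ => C_mul_vb _ (sub_C_pow hv hm i)

end Stmt3Aux

namespace Stmt3Aux

theorem coprime_eval {p q : Polynomial ℂ} (hpq : IsCoprime p q) (α : ℂ)
    (hp : p.eval α = 0) (hq : q.eval α = 0) : False := by
  obtain ⟨u, v, huv⟩ := hpq
  have := congrArg (Polynomial.eval α) huv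
  simp [hp, hq] at this

theorem lderiv_vb {F : LaurentSeries ℂ} {n : ℤ} (hv : Vb F n) : Vb (lderiv F) (n - 1) := by
  intro i hi
  rw [lderiv_coeff, hv (i + 1) (by omega), mul_zero]

end Stmt3Aux

namespace Stmt3Aux

theorem neg_case {p q : Polynomial ℂ} (hp : p ≠ 0) (hq : q ≠ 0)
    {F : LaurentSeries ℂ} (hneg : ∃ i < (0:ℤ), F.coeff i ≠ 0)
    (hF : Polynomial.aeval F q * lderiv F = Polynomial.aeval F p) :
    F.order = -1 ∧ p.natDegree = q.natDegree + 2 ∧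
      F.coeff (-1) = - q.leadingCoeff / p.leadingCoeff := by
  obtain ⟨i0, hi0, hc0⟩ := hneg
  have hF0 : F ≠ 0 := fun h => hc0 (by simp [h])
  set n := F.order with hn_def
  have hn : n < 0 := lt_of_le_of_lt (HahnSeries.order_le_of_coeff_ne_zero hc0) hi0
  have hvF : Vb F n := fun i hi => HahnSeries.coeff_eq_zero_of_lt_order hi
  set c := F.coeff n with hc_def
  have hc : c ≠ 0 := (HahnSeries.coeff_order_eq_zero.not.mpr hF0)
  have ha : p.leadingCoeff ≠ 0 := Polynomial.leadingCoeff_ne_zero.mpr hp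
  have hb : q.leadingCoeff ≠ 0 := Polynomial.leadingCoeff_ne_zero.mpr hq
  set dp := p.natDegree
  set dq := q.natDegree
  -- left side data
  have hLv : Vb (Polynomial.aeval F q * lderiv F) ((dq : ℤ) * n + (n - 1)) :=
    mul_vb (aeval_vb_neg hvF hn q) (lderiv_vb hvF)
  have hld : (lderiv F).coeff (n - 1) = (n : ℂ) * c := by
    rw [lderiv_coeff, sub_add_cancel]
    push_cast
    ring
  have hLc : (Polynomial.aeval F q * lderiv F).coeff ((dq : ℤ) * n + (n - 1)) =
      q.leadingCoeff * c ^ dq * ((n : ℂ) * c) := by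
    rw [mul_coeff_vb (aeval_vb_neg hvF hn q) (lderiv_vb hvF), aeval_coeff_neg hvF hn, hld]
  have hLne : q.leadingCoeff * c ^ dq * ((n : ℂ) * c) ≠ 0 := by
    apply mul_ne_zero (mul_ne_zero hb (pow_ne_zero _ hc))
    apply mul_ne_zero _ hc
    exact_mod_cast fun h => absurd h (by omega : (n : ℤ) ≠ 0)
  have hRv : Vb (Polynomial.aeval F p) ((dp : ℤ) * n) := aeval_vb_neg hvF hn p
  have hRc : (Polynomial.aeval F p).coeff ((dp : ℤ) * n) = p.leadingCoeff * c ^ dp :=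
    aeval_coeff_neg hvF hn p
  have hRne : p.leadingCoeff * c ^ dp ≠ 0 := mul_ne_zero ha (pow_ne_zero _ hc)
  -- the two orders coincide
  have heq : (dq : ℤ) * n + (n - 1) = (dp : ℤ) * n := by
    rcases lt_trichotomy ((dq : ℤ) * n + (n - 1)) ((dp : ℤ) * n) with h | h | h
    · exfalso
      apply hLne
      rw [← hLc, hF]
      exact hRv _ h
    · exact h
    · exfalso
      apply hRne
      rw [← hRc, ← hF]
      exact hLv _ h
  have hk : n * ((dp : ℤ) - dq - 1) = -1 := by linear_combination -heq
  have hn1 : n = -1 := by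
    have hdvd : n ∣ (-1 : ℤ) := ⟨_, hk.symm⟩
    have := Int.isUnit_iff.mp (isUnit_of_dvd_unit hdvd isUnit_one.neg)
    omega
  have hdeg : (dp : ℤ) = (dq : ℤ) + 2 := by
    rw [hn1] at hk
    omega
  have hdeg' : dp = dq + 2 := by omega
  -- coefficient identity
  have hcoeff : q.leadingCoeff * c ^ dq * ((n : ℂ) * c) = p.leadingCoeff * c ^ dp := by
    rw [← hLc, ← hRc, hF, heq]
  rw [hn1] at hcoeff
  have hc2 : - q.leadingCoeff * c ^ (dq + 1) = p.leadingCoeff * c * c ^ (dq + 1) := by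
    rw [hdeg'] at hcoeff
    push_cast at hcoeff
    linear_combination hcoeff
  have hfin : - q.leadingCoeff = p.leadingCoeff * c :=
    mul_right_cancel₀ (pow_ne_zero _ hc) hc2
  refine ⟨hn1, hdeg', ?_⟩
  have : F.coeff (-1) = c := by rw [hc_def, hn1]
  rw [this, eq_div_iff ha]
  linear_combination -hfin

end Stmt3Aux

namespace Stmt3Aux

theorem nonneg_case {p q : Polynomial ℂ} (hpq : IsCoprime p q) {F : LaurentSeries ℂ}
    (hneg : ∀ i < (0:ℤ), F.coeff i = 0) (hFnc : ¬ ∃ c : ℂ, F = HahnSeries.C c)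
    (hF : Polynomial.aeval F q * lderiv F = Polynomial.aeval F p) :
    p.eval (F.coeff 0) ≠ 0 ∧ q.eval (F.coeff 0) ≠ 0 ∧
      F.coeff 1 = p.eval (F.coeff 0) / q.eval (F.coeff 0) ∧ F.coeff 1 ≠ 0 ∧
      (F - HahnSeries.C (F.coeff 0)).order = 1 := by
  set α := F.coeff 0 with hα_def
  set G := F - HahnSeries.C α with hG_def
  have hG0 : G ≠ 0 := by
    intro h
    exact hFnc ⟨α, by rwa [hG_def, sub_eq_zero] at h⟩
  set m := G.order with hm_def
  have hvG : Vb G m := fun i hi => HahnSeries.coeff_eq_zero_of_lt_order hi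
  have hGm : G.coeff m ≠ 0 := (HahnSeries.coeff_order_eq_zero.not.mpr hG0)
  have hC0 : ∀ i : ℤ, i ≠ 0 → (HahnSeries.C α : LaurentSeries ℂ).coeff i = 0 := fun i hi => by
    rw [HahnSeries.C_apply, HahnSeries.coeff_single_of_ne hi]
  have hFG : ∀ i : ℤ, i ≠ 0 → F.coeff i = G.coeff i := fun i hi => by
    rw [hG_def, HahnSeries.coeff_sub, hC0 i hi, sub_zero]
  have hGle : ∀ i ≤ (0:ℤ), G.coeff i = 0 := by
    intro i hi
    rcases eq_or_lt_of_le hi with h | h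
    · rw [hG_def, HahnSeries.coeff_sub, h, HahnSeries.C_apply, HahnSeries.coeff_single_same,
        ← hα_def, sub_self]
    · rw [hG_def, HahnSeries.coeff_sub, hneg i h, hC0 i (by omega), sub_zero]
  have hm : 1 ≤ m := by
    by_contra hmle
    exact hGm (hGle m (by omega))
  have hvG' : Vb (F - HahnSeries.C α) m := hG_def ▸ hvG
  -- derivative facts
  have hldv : Vb (lderiv F) (m - 1) := by
    intro i hi
    rw [lderiv_coeff]
    by_cases h0 : i + 1 = 0
    · have : ((i:ℂ) + 1) = ((i + 1 : ℤ) : ℂ) := by push_cast; ring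
      rw [this, h0]
      simp
    · rw [hFG _ h0, hvG (i + 1) (by omega), mul_zero]
  have hldc : (lderiv F).coeff (m - 1) = (m : ℂ) * G.coeff m := by
    rw [lderiv_coeff, sub_add_cancel, hFG m (by omega)]
    congr 1
    push_cast
    ring
  -- aeval facts
  have hqsub : Vb (Polynomial.aeval F q - HahnSeries.C (q.eval α)) m :=
    aeval_sub_C hvG' (by omega) q
  have hpsub : Vb (Polynomial.aeval F p - HahnSeries.C (p.eval α)) m :=
    aeval_sub_C hvG' (by omega) p
  have haev : ∀ r : Polynomial ℂ, Vb (Polynomial.aeval F r - HahnSeries.C (r.eval α)) m →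
      (Polynomial.aeval F r).coeff 0 = r.eval α := by
    intro r h
    have h2 := h 0 (by omega)
    rw [HahnSeries.coeff_sub, HahnSeries.C_apply, HahnSeries.coeff_single_same] at h2
    exact sub_eq_zero.mp h2
  have haev2 : ∀ r : Polynomial ℂ, Vb (Polynomial.aeval F r - HahnSeries.C (r.eval α)) m →
      ∀ k : ℤ, k ≠ 0 → k < m → (Polynomial.aeval F r).coeff k = 0 := by
    intro r h k hk0 hkm
    have h2 := h k hkm
    rwa [HahnSeries.coeff_sub, HahnSeries.C_apply, HahnSeries.coeff_single_of_ne hk0,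
      sub_zero] at h2
  have hqv0 : Vb (Polynomial.aeval F q) 0 := fun i hi =>
    haev2 q hqsub i (by omega) (by omega)
  -- rule out m ≥ 2
  have hm1 : m = 1 := by
    by_contra hm2
    have hm2' : 2 ≤ m := by omega
    have h1 : q.eval α * ((m : ℂ) * G.coeff m) = 0 := by
      have h2 := congrArg (fun x : LaurentSeries ℂ => x.coeff ((0:ℤ) + (m - 1))) hF
      try simp only at h2
      rw [mul_coeff_vb hqv0 hldv, hldc, haev q hqsub,
        haev2 p hpsub ((0:ℤ) + (m - 1)) (by omega) (by omega)] at h2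
      exact h2
    have hqα : q.eval α = 0 := by
      rcases mul_eq_zero.mp h1 with h | h
      · exact h
      · exfalso
        rcases mul_eq_zero.mp h with h' | h'
        · exact absurd h' (by exact_mod_cast (by omega : m ≠ 0))
        · exact hGm h'
    have hqvm : Vb (Polynomial.aeval F q) m := by
      intro i hi
      by_cases h0 : i = 0
      · rw [h0, haev q hqsub, hqα]
      · exact haev2 q hqsub i h0 hi
    have hpα : p.eval α = 0 := by
      have h2 := congrArg (fun x : LaurentSeries ℂ => x.coeff ((0:ℤ))) hF
      try simp only at h2
      rw [mul_vb hqvm hldv 0 (by omega), haev p hpsub] at h2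
      exact h2.symm
    exact coprime_eval hpq α hpα hqα
  -- now m = 1
  rw [hm1] at hvG hGm hldv hldc hqsub hpsub haev haev2
  have h0 : q.eval α * ((1:ℤ) * G.coeff 1) = p.eval α := by
    have h2 := congrArg (fun x : LaurentSeries ℂ => x.coeff ((0:ℤ) + (1 - 1))) hF
    try simp only at h2
    rw [mul_coeff_vb hqv0 hldv, hldc] at h2
    rw [haev q hqsub] at h2
    have he : ((0:ℤ) + (1 - 1)) = 0 := by norm_num
    rw [he, haev p hpsub] at h2
    exact_mod_cast h2
  have hqα : q.eval α ≠ 0 := by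
    intro h
    apply coprime_eval hpq α _ h
    rw [← h0, h, zero_mul]
  have hcne : G.coeff 1 ≠ 0 := hGm
  have hpα : p.eval α ≠ 0 := by
    rw [← h0]
    apply mul_ne_zero hqα
    simpa using hcne
  have hF1 : F.coeff 1 = G.coeff 1 := hFG 1 one_ne_zero
  refine ⟨hpα, hqα, ?_, ?_, hm1⟩
  · rw [hF1, eq_div_iff hqα]
    push_cast at h0
    linear_combination h0
  · rw [hF1]
    exact hcne

end Stmt3Aux


open Stmt3Aux in
/-- a nonconstant scalar Laurent series solution `F` of
`q(F)·dF/dx = p(F)` has order `-1`, `0` or `1`, and in each case the indicated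
coefficient is determined by `p` and `q`. -/
theorem stmt_3 (p q : Polynomial ℂ) (hp : p ≠ 0) (hq : q ≠ 0) (hpq : IsCoprime p q)
    (F : LaurentSeries ℂ) (hFnc : ¬ ∃ c : ℂ, F = HahnSeries.C c)
    (hF : Polynomial.aeval F q * lderiv F = Polynomial.aeval F p) :
    (F.order = -1 ∨ F.order = 0 ∨ F.order = 1) ∧
    (F.order = 1 →
      Polynomial.eval 0 p * Polynomial.eval 0 q ≠ 0 ∧
      F.coeff 1 = Polynomial.eval 0 p / Polynomial.eval 0 q) ∧
    (F.order = 0 →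
      Polynomial.eval (F.coeff 0) p * Polynomial.eval (F.coeff 0) q ≠ 0 ∧
      F.coeff 1 = Polynomial.eval (F.coeff 0) p / Polynomial.eval (F.coeff 0) q) ∧
    (F.order = -1 →
      p.natDegree = q.natDegree + 2 ∧
      F.coeff (-1) = - q.leadingCoeff / p.leadingCoeff) := by
  by_cases hneg : ∀ i < (0:ℤ), F.coeff i = 0
  · obtain ⟨hpα, hqα, hc1, hc1ne, hord1⟩ := nonneg_case hpq hneg hFnc hF
    by_cases hα : F.coeff 0 = 0
    · have hFeq : F - HahnSeries.C (F.coeff 0) = F := by rw [hα]; simp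
      have hordF : F.order = 1 := by rw [← hFeq]; exact hord1
      refine ⟨Or.inr (Or.inr hordF), ?_, ?_, ?_⟩
      · intro _
        rw [hα] at hpα hqα hc1
        exact ⟨mul_ne_zero hpα hqα, hc1⟩
      · intro h; exact absurd (hordF.symm.trans h) (by norm_num)
      · intro h; exact absurd (hordF.symm.trans h) (by norm_num)
    · have hordF : F.order = 0 := order_eq_of hα hneg
      refine ⟨Or.inr (Or.inl hordF), ?_, ?_, ?_⟩
      · intro h; exact absurd (hordF.symm.trans h) (by norm_num)
      · intro _; exact ⟨mul_ne_zero hpα hqα, hc1⟩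
      · intro h; exact absurd (hordF.symm.trans h) (by norm_num)
  · push_neg at hneg
    obtain ⟨hord, hdeg, hcoef⟩ := neg_case hp hq hneg hF
    refine ⟨Or.inl hord, ?_, ?_, fun _ => ⟨hdeg, hcoef⟩⟩
    · intro h; exact absurd (hord.symm.trans h) (by norm_num)
    · intro h; exact absurd (hord.symm.trans h) (by norm_num)
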